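/- Let T be a full-rank lattice in ℝ^n, V ⊆ T a full-rank sublattice, and k ≥ 2, and suppose d(V) = 2·d(T). Let Γ_P = {(t₁,…,t_k) ∈ T^k : t₁ + ⋯ + t_k ∈ V}. Then the kissing number of Γ_P (the number of x ∈ Γ_P with ‖x‖² = d(Γ_P) = d(V)) equals k·τ(V) + (k choose 2)·M, where τ(V) is the number of v ∈ V with ‖v‖² = d(V) and M is the number of ordered pairs (n₁, n₂) ∈ T × T with ‖n₁‖² = ‖n₂‖² = d(T) and n₁ + n₂ ∈ V. -/

import Mathlib

private lemma card_lt_pairs (k : ℕ) :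
    ({p : Fin k × Fin k | p.1 < p.2} : Set (Fin k × Fin k)).ncard = k.choose 2 := by
  have e : {p : Fin k × Fin k | p.1 < p.2} ≃ Σ j : Fin k, Fin j.1 :=
    { toFun := fun p => ⟨p.1.2, ⟨p.1.1.1, p.2⟩⟩
      invFun := fun q => ⟨(⟨q.2.1, q.2.2.trans q.1.2⟩, q.1), q.2.2⟩
      left_inv := by rintro ⟨⟨i, j⟩, h⟩; rfl
      right_inv := by rintro ⟨j, i⟩; rfl }
  rw [← Nat.card_coe_set_eq, Nat.card_congr e, Nat.card_eq_fintype_card,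
    Fintype.card_sigma]
  simp only [Fintype.card_fin]
  rw [Fin.sum_univ_eq_sum_range (fun i => i), Finset.sum_range_id, Nat.choose_two_right]

private lemma ncard_prod_fin {α β : Type*} {s : Set α} {t : Set β} (hs : s.Finite)
    (ht : t.Finite) : (s ×ˢ t).ncard = s.ncard * t.ncard := by
  rw [Set.ncard_eq_toFinset_card _ (hs.prod ht), ← Set.Finite.toFinset_prod hs ht,
    Finset.card_product, Set.ncard_eq_toFinset_card _ hs, Set.ncard_eq_toFinset_card _ ht]

/-- Kissing number of the single parity-check lattice when `d(V) = 2·d(T)`: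
`τ(Γ_P) = k·τ(V) + C(k,2)·M`, where `M` counts ordered pairs of minimal vectors of `T`
summing into `V`. -/
theorem stmt_16 {n : ℕ} (k : ℕ) (hk : 2 ≤ k)
    (T V : Submodule ℤ (EuclideanSpace ℝ (Fin n)))
    [DiscreteTopology T] [IsZLattice ℝ T]
    [DiscreteTopology V] [IsZLattice ℝ V]
    (hVT : V ≤ T)
    (dV dT : ℝ)
    (hdV : IsLeast {d : ℝ | ∃ x ∈ V, x ≠ (0 : EuclideanSpace ℝ (Fin n)) ∧ ‖x‖ ^ 2 = d} dV)
    (hdT : IsLeast {d : ℝ | ∃ x ∈ T, x ≠ (0 : EuclideanSpace ℝ (Fin n)) ∧ ‖x‖ ^ 2 = d} dT)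
    (hd2 : dV = 2 * dT) :
    {x : Fin k → EuclideanSpace ℝ (Fin n) |
        ((∀ i, x i ∈ T) ∧ (∑ i, x i) ∈ V) ∧ (∑ i, ‖x i‖ ^ 2) = dV}.ncard =
      k * {v : EuclideanSpace ℝ (Fin n) | v ∈ V ∧ ‖v‖ ^ 2 = dV}.ncard +
        k.choose 2 *
          {p : EuclideanSpace ℝ (Fin n) × EuclideanSpace ℝ (Fin n) |
            p.1 ∈ T ∧ p.2 ∈ T ∧ ‖p.1‖ ^ 2 = dT ∧ ‖p.2‖ ^ 2 = dT ∧
              p.1 + p.2 ∈ V}.ncard := by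
  classical
  obtain ⟨⟨w, hwT, hw0, hwd⟩, hTlb⟩ := hdT
  have hdTpos : 0 < dT := hwd ▸ pow_pos (norm_pos_iff.mpr hw0) 2
  have hdVpos : 0 < dV := by rw [hd2]; linarith
  set E := EuclideanSpace ℝ (Fin n) with hE
  set MinV := {v : E | v ∈ V ∧ ‖v‖ ^ 2 = dV} with hMinV
  set Pairs := {p : E × E | p.1 ∈ T ∧ p.2 ∈ T ∧ ‖p.1‖ ^ 2 = dT ∧ ‖p.2‖ ^ 2 = dT ∧
      p.1 + p.2 ∈ V} with hPairs
  set S := {x : Fin k → E |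
      ((∀ i, x i ∈ T) ∧ (∑ i, x i) ∈ V) ∧ (∑ i, ‖x i‖ ^ 2) = dV} with hS
  -- finiteness of the minimal-vector sets
  have hclT : IsClosed (T : Set E) := by
    have : DiscreteTopology (Submodule.toAddSubgroup T) := ‹DiscreteTopology T›
    exact AddSubgroup.isClosed_of_discrete (H := Submodule.toAddSubgroup T)
  have hclV : IsClosed (V : Set E) := by
    have : DiscreteTopology (Submodule.toAddSubgroup V) := ‹DiscreteTopology V›
    exact AddSubgroup.isClosed_of_discrete (H := Submodule.toAddSubgroup V)
  have hballT : ∀ (r : ℝ), {y : E | y ∈ T ∧ ‖y‖ ^ 2 = r}.Finite := by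
    intro r
    have : DiscreteTopology (T : Set E) := ‹DiscreteTopology T›
    refine (Metric.finite_isBounded_inter_isClosed (isDiscrete_iff_discreteTopology.mpr this)
      (Metric.isBounded_closedBall (x := (0 : E)) (r := Real.sqrt r)) hclT).subset ?_
    rintro y ⟨hyT, hyd⟩
    refine ⟨Metric.mem_closedBall.mpr ?_, hyT⟩
    rw [dist_zero_right]
    rw [← hyd, Real.sqrt_sq (norm_nonneg y)]
  have hMinTfin : {y : E | y ∈ T ∧ ‖y‖ ^ 2 = dT}.Finite := hballT dT
  have hMinVfin : MinV.Finite := by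
    have : DiscreteTopology (V : Set E) := ‹DiscreteTopology V›
    refine (Metric.finite_isBounded_inter_isClosed (isDiscrete_iff_discreteTopology.mpr this)
      (Metric.isBounded_closedBall (x := (0 : E)) (r := Real.sqrt dV)) hclV).subset ?_
    rintro y ⟨hyV, hyd⟩
    refine ⟨Metric.mem_closedBall.mpr ?_, hyV⟩
    rw [dist_zero_right, ← hyd, Real.sqrt_sq (norm_nonneg y)]
  have hPairsfin : Pairs.Finite := by
    refine (hMinTfin.prod hMinTfin).subset ?_
    rintro ⟨a, b⟩ ⟨h1, h2, h3, h4, -⟩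
    exact ⟨⟨h1, h3⟩, ⟨h2, h4⟩⟩
  -- evaluation helpers
  have hev1 : ∀ (i j : Fin k) (a b : E), i ≠ j →
      ((Pi.single i a + Pi.single j b : Fin k → E)) i = a := by
    intro i j a b hij
    simp [Pi.single_eq_of_ne hij]
  have hev2 : ∀ (i j : Fin k) (a b : E), i ≠ j →
      ((Pi.single i a + Pi.single j b : Fin k → E)) j = b := by
    intro i j a b hij
    simp [Pi.single_eq_of_ne hij.symm]
  have hev0 : ∀ (i j m : Fin k) (a b : E), m ≠ i → m ≠ j →
      ((Pi.single i a + Pi.single j b : Fin k → E)) m = 0 := by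
    intro i j m a b hmi hmj
    simp [Pi.single_eq_of_ne hmi, Pi.single_eq_of_ne hmj]
  have hnzV : ∀ v : E, ‖v‖ ^ 2 = dV → v ≠ 0 := by
    intro v hv h
    rw [h, norm_zero] at hv
    simp at hv
    exact absurd hv.symm (ne_of_gt hdVpos)
  have hnzT : ∀ v : E, ‖v‖ ^ 2 = dT → v ≠ 0 := by
    intro v hv h
    rw [h, norm_zero] at hv
    simp at hv
    exact absurd hv.symm (ne_of_gt hdTpos)
  -- the two pieces
  set S1 := (fun q : Fin k × E => (Pi.single q.1 q.2 : Fin k → E)) '' ((Set.univ : Set (Fin k)) ×ˢ MinV)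
    with hS1
  set S2 := (fun q : (Fin k × Fin k) × (E × E) =>
      (Pi.single q.1.1 q.2.1 + Pi.single q.1.2 q.2.2 : Fin k → E)) ''
      (({p : Fin k × Fin k | p.1 < p.2} : Set (Fin k × Fin k)) ×ˢ Pairs) with hS2
  have hS1S : S1 ⊆ S := by
    rintro x ⟨⟨i, v⟩, ⟨-, hvV, hvd⟩, rfl⟩
    dsimp only
    refine ⟨⟨?_, ?_⟩, ?_⟩
    · intro m
      rcases eq_or_ne m i with rfl | hmi
      · rw [Pi.single_eq_same]; exact hVT hvV
      · rw [Pi.single_eq_of_ne hmi]; exact T.zero_mem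
    · rw [Fintype.sum_pi_single']; exact hvV
    · rw [Finset.sum_eq_single i]
      · rw [Pi.single_eq_same, hvd]
      · intro m _ hmi
        rw [Pi.single_eq_of_ne hmi, norm_zero]; ring
      · intro h; exact absurd (Finset.mem_univ i) h
  have hS2S : S2 ⊆ S := by
    rintro x ⟨⟨⟨i, j⟩, ⟨a, b⟩⟩, ⟨hlt, ha, hb, hda, hdb, hab⟩, rfl⟩
    dsimp only
    have hij : i ≠ j := ne_of_lt hlt
    refine ⟨⟨?_, ?_⟩, ?_⟩
    · intro m
      rcases eq_or_ne m i with rfl | hmi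
      · rw [hev1 m j a b hij]; exact ha
      rcases eq_or_ne m j with rfl | hmj
      · rw [hev2 i m a b hij]; exact hb
      · rw [hev0 i j m a b hmi hmj]; exact T.zero_mem
    · have : ∑ m, ((Pi.single i a + Pi.single j b : Fin k → E)) m = a + b := by
        simp only [Pi.add_apply]
        rw [Finset.sum_add_distrib, Fintype.sum_pi_single', Fintype.sum_pi_single']
      rw [this]; exact hab
    · have hz : ∀ m ∈ Finset.univ, m ∉ ({i, j} : Finset (Fin k)) →
          ‖((Pi.single i a + Pi.single j b : Fin k → E)) m‖ ^ 2 = 0 := by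
        intro m _ hm
        simp only [Finset.mem_insert, Finset.mem_singleton] at hm
        push_neg at hm
        rw [hev0 i j m a b hm.1 hm.2, norm_zero]; ring
      rw [← Finset.sum_subset (Finset.subset_univ ({i, j} : Finset (Fin k))) hz,
        Finset.sum_pair hij, hev1 i j a b hij, hev2 i j a b hij, hda, hdb, hd2]
      ring
  -- decomposition
  have hSeq : S = S1 ∪ S2 := by
    apply Set.Subset.antisymm
    · rintro x ⟨⟨hxT, hxV⟩, hxnorm⟩
      have hxge : ∀ m, x m ≠ 0 → dT ≤ ‖x m‖ ^ 2 := fun m h => hTlb ⟨x m, hxT m, h, rfl⟩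
      have hnn : ∀ m : Fin k, (0 : ℝ) ≤ ‖x m‖ ^ 2 := fun m => by positivity
      set F : Finset (Fin k) := Finset.univ.filter (fun m => x m ≠ 0) with hF
      have hxF : ∀ m, m ∉ F → x m = 0 := by
        intro m hm; simpa [hF] using hm
      have hFsum : ∑ m ∈ F, ‖x m‖ ^ 2 = dV := by
        rw [Finset.sum_subset (Finset.subset_univ F)
          (fun m _ hm => by rw [hxF m hm, norm_zero]; ring), hxnorm]
      have hFne : F.Nonempty := by
        by_contra h
        rw [Finset.not_nonempty_iff_eq_empty] at h
        rw [h, Finset.sum_empty] at hFsum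
        exact absurd hFsum (ne_of_lt hdVpos)
      obtain ⟨i, hiF⟩ := hFne
      have hxi0 : x i ≠ 0 := by simpa [hF] using hiF
      by_cases hsing : ∀ m ∈ F, m = i
      · -- single nonzero coordinate
        have hFi : F = {i} := Finset.eq_singleton_iff_unique_mem.mpr ⟨hiF, hsing⟩
        have hxeq : x = Pi.single i (x i) := by
          funext m
          rcases eq_or_ne m i with rfl | hmi
          · rw [Pi.single_eq_same]
          · rw [Pi.single_eq_of_ne hmi]
            exact hxF m (by rw [hFi]; simpa using hmi)
        have hsumx : ∑ m, x m = x i := by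
          rw [← Finset.sum_subset (Finset.subset_univ ({i} : Finset (Fin k)))
            (fun m _ hm => hxF m (by rw [hFi]; exact hm)), Finset.sum_singleton]
        have hnormi : ‖x i‖ ^ 2 = dV := by
          rw [hFi, Finset.sum_singleton] at hFsum; exact hFsum
        left
        exact ⟨(i, x i), ⟨Set.mem_univ i, (by rw [← hsumx]; exact hxV), hnormi⟩, hxeq.symm⟩
      · -- two nonzero coordinates
        push_neg at hsing
        obtain ⟨j, hjF, hji⟩ := hsing
        have hxj0 : x j ≠ 0 := by simpa [hF] using hjF
        have hij : i ≠ j := Ne.symm hji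
        have h1 : dT ≤ ‖x i‖ ^ 2 := hxge i hxi0
        have h2 : dT ≤ ‖x j‖ ^ 2 := hxge j hxj0
        have hpairsub : ({i, j} : Finset (Fin k)) ⊆ F := by
          intro m hm
          simp only [Finset.mem_insert, Finset.mem_singleton] at hm
          rcases hm with rfl | rfl
          exacts [hiF, hjF]
        have hsum2 : ‖x i‖ ^ 2 + ‖x j‖ ^ 2 ≤ dV := by
          have hle := Finset.sum_le_sum_of_subset_of_nonneg hpairsub (fun m _ _ => hnn m)
          rw [Finset.sum_pair hij] at hle
          linarith [hFsum, hle]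
        have hF2 : ∀ m, m ≠ i → m ≠ j → x m = 0 := by
          intro m hmi hmj
          by_contra hm0
          have hmF : m ∈ F := by simp [hF, hm0]
          have h3 : dT ≤ ‖x m‖ ^ 2 := hxge m hm0
          have hsub3 : ({m, i, j} : Finset (Fin k)) ⊆ F := by
            intro r hr
            simp only [Finset.mem_insert, Finset.mem_singleton] at hr
            rcases hr with rfl | rfl | rfl
            exacts [hmF, hiF, hjF]
          have hbig : ‖x m‖ ^ 2 + (‖x i‖ ^ 2 + ‖x j‖ ^ 2) ≤ dV := by
            rw [← hFsum]
            have heq3 : ∑ r ∈ ({m, i, j} : Finset (Fin k)), ‖x r‖ ^ 2 =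
                ‖x m‖ ^ 2 + (‖x i‖ ^ 2 + ‖x j‖ ^ 2) := by
              rw [Finset.sum_insert (by simp [hmi, hmj]), Finset.sum_pair hij]
            rw [← heq3]
            exact Finset.sum_le_sum_of_subset_of_nonneg hsub3 (fun r _ _ => hnn r)
          rw [hd2] at hbig
          linarith
        have hdi : ‖x i‖ ^ 2 = dT := by rw [hd2] at hsum2; linarith
        have hdj : ‖x j‖ ^ 2 = dT := by rw [hd2] at hsum2; linarith
        have hxeq : x = Pi.single i (x i) + Pi.single j (x j) := by
          funext m
          rcases eq_or_ne m i with rfl | hmi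
          · rw [hev1 m j (x m) (x j) hij]
          rcases eq_or_ne m j with rfl | hmj
          · rw [hev2 i m (x i) (x m) hij]
          · rw [hev0 i j m (x i) (x j) hmi hmj]
            exact hF2 m hmi hmj
        have hsumx : ∑ m, x m = x i + x j := by
          rw [← Finset.sum_subset (Finset.subset_univ ({i, j} : Finset (Fin k)))
            (fun m _ hm => ?_), Finset.sum_pair hij]
          simp only [Finset.mem_insert, Finset.mem_singleton] at hm
          push_neg at hm
          exact hF2 m hm.1 hm.2
        right
        rcases lt_or_gt_of_ne hij with hlt | hlt
        · exact ⟨((i, j), (x i, x j)),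
            ⟨hlt, hxT i, hxT j, hdi, hdj, by rw [← hsumx]; exact hxV⟩, hxeq.symm⟩
        · refine ⟨((j, i), (x j, x i)),
            ⟨hlt, hxT j, hxT i, hdj, hdi, by rw [add_comm, ← hsumx]; exact hxV⟩, ?_⟩
          show Pi.single j (x j) + Pi.single i (x i) = x
          rw [add_comm]
          exact hxeq.symm
    · rintro x (h | h)
      exacts [hS1S h, hS2S h]
  -- disjointness
  have hdisj : Disjoint S1 S2 := by
    rw [Set.disjoint_left]
    rintro x ⟨⟨i, v⟩, ⟨-, hvV, hvd⟩, rfl⟩ ⟨⟨⟨i', j'⟩, ⟨a, b⟩⟩, ⟨hlt, ha, hb, hda, hdb, -⟩, heq⟩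
    dsimp only at heq
    have hij' : i' ≠ j' := ne_of_lt hlt
    have ha0 : a ≠ 0 := hnzT a hda
    have hb0 : b ≠ 0 := hnzT b hdb
    have h1 := congrFun heq i'
    rw [hev1 i' j' a b hij'] at h1
    have h2 := congrFun heq j'
    rw [hev2 i' j' a b hij'] at h2
    have hii : i' = i := by
      by_contra h
      rw [Pi.single_eq_of_ne h] at h1
      exact ha0 h1
    have hjj : j' = i := by
      by_contra h
      rw [Pi.single_eq_of_ne h] at h2
      exact hb0 h2
    exact hij' (hii.trans hjj.symm)
  -- cardinalities
  have hltfin : ({p : Fin k × Fin k | p.1 < p.2} : Set (Fin k × Fin k)).Finite :=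
    Set.toFinite _
  have hS1card : S1.ncard = k * MinV.ncard := by
    have hinj : Set.InjOn (fun q : Fin k × E => (Pi.single q.1 q.2 : Fin k → E))
        ((Set.univ : Set (Fin k)) ×ˢ MinV) := by
      rintro ⟨i, v⟩ ⟨-, hvV, hvd⟩ ⟨i', v'⟩ ⟨-, hv'V, hv'd⟩ heq
      dsimp only at heq
      have hv0 : v ≠ 0 := hnzV v hvd
      have h1 := congrFun heq i
      rw [Pi.single_eq_same] at h1
      have hii : i = i' := by
        by_contra h
        rw [Pi.single_eq_of_ne h] at h1
        exact hv0 h1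
      subst hii
      rw [Pi.single_eq_same] at h1
      rw [h1]
    rw [hS1, Set.ncard_image_of_injOn hinj, ncard_prod_fin Set.finite_univ hMinVfin,
      Set.ncard_univ, Nat.card_eq_fintype_card, Fintype.card_fin]
  have hS2card : S2.ncard = k.choose 2 * Pairs.ncard := by
    have hinj : Set.InjOn (fun q : (Fin k × Fin k) × (E × E) =>
        (Pi.single q.1.1 q.2.1 + Pi.single q.1.2 q.2.2 : Fin k → E))
        (({p : Fin k × Fin k | p.1 < p.2} : Set (Fin k × Fin k)) ×ˢ Pairs) := by
      rintro ⟨⟨i, j⟩, ⟨a, b⟩⟩ ⟨hlt, ha, hb, hda, hdb, -⟩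
        ⟨⟨i', j'⟩, ⟨a', b'⟩⟩ ⟨hlt', ha', hb', hda', hdb', -⟩ heq
      dsimp only at heq
      have hij : i ≠ j := ne_of_lt hlt
      have hij' : i' ≠ j' := ne_of_lt hlt'
      have ha0 : a ≠ 0 := hnzT a hda
      have hb0 : b ≠ 0 := hnzT b hdb
      have ha0' : a' ≠ 0 := hnzT a' hda'
      have hb0' : b' ≠ 0 := hnzT b' hdb'
      -- i' is i or j
      have hmem : ∀ m : Fin k, ((Pi.single i a + Pi.single j b : Fin k → E)) m ≠ 0 → m = i ∨ m = j := by
        intro m hm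
        by_contra h
        push_neg at h
        exact hm (hev0 i j m a b h.1 h.2)
      have hi' : i' = i ∨ i' = j := by
        apply hmem
        rw [heq, hev1 i' j' a' b' hij']
        exact ha0'
      have hj' : j' = i ∨ j' = j := by
        apply hmem
        rw [heq, hev2 i' j' a' b' hij']
        exact hb0'
      have hii : i' = i ∧ j' = j := by
        rcases hi' with h1 | h1 <;> rcases hj' with h2 | h2
        · exact absurd (h1.trans h2.symm) hij'
        · exact ⟨h1, h2⟩
        · -- i' = j, j' = i : contradicts orders i < j, i' < j'
          exfalso
          rw [h1, h2] at hlt'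
          have hlt2 : j < i := hlt'
          have hlt1 : i < j := hlt
          exact absurd hlt1 (not_lt_of_gt hlt2)
        · exact absurd (h1.trans h2.symm) hij'
      obtain ⟨h1, h2⟩ := hii
      subst h1; subst h2
      have hA := congrFun heq i'
      rw [hev1 i' j' a b hij, hev1 i' j' a' b' hij] at hA
      have hB := congrFun heq j'
      rw [hev2 i' j' a b hij, hev2 i' j' a' b' hij] at hB
      rw [hA, hB]
    rw [hS2, Set.ncard_image_of_injOn hinj, ncard_prod_fin hltfin hPairsfin,
      card_lt_pairs]
  have hS1fin : S1.Finite := (Set.finite_univ.prod hMinVfin).image _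
  have hS2fin : S2.Finite := (hltfin.prod hPairsfin).image _
  rw [hSeq, Set.ncard_union_eq hdisj hS1fin hS2fin, hS1card, hS2card]
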